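/- There exist a constant c > 0, depending only on α and T, and t₀ with max(0, T − 1/e) < t₀ < T, such that for all t with t₀ < t < T one has |⟨f_t ⊗₁ f_t, f_t⟩| ≥ c/√|log(T−t)|. -/

import Mathlib

open MeasureTheory Real Filter Topology

/-- `λ_t := |log(T−t)|/(2α−1)`. -/
noncomputable def lam (T α t : ℝ) : ℝ := |Real.log (T - t)| / (2 * α - 1)

/-- The kernel `f_t`. -/
noncomputable def fker (T α t : ℝ) (u v : ℝ) : ℝ :=
  if u ∈ Set.Icc (0:ℝ) t ∧ v ∈ Set.Icc (0:ℝ) t then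
    (1 / (2 * Real.sqrt (lam T α t))) * (T - max u v) ^ (α - 1) * (T - min u v) ^ (-α)
  else 0

/-- The kernel `g_t`. -/
noncomputable def gker (T α t : ℝ) (u v : ℝ) : ℝ :=
  if u ∈ Set.Icc (0:ℝ) t ∧ v ∈ Set.Icc (0:ℝ) t then
    (T - u) ^ (-α) * (T - v) ^ (-α) *
      ((T - max u v) ^ (2 * α - 1) - (T - t) ^ (2 * α - 1)) / |Real.log (T - t)|
  else 0

/-- `⟨p,q⟩ := ∫_{[0,T]²} p(u,v) q(u,v) du dv`. -/
noncomputable def ip (T : ℝ) (p q : ℝ → ℝ → ℝ) : ℝ :=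
  ∫ u in Set.Icc (0:ℝ) T, ∫ v in Set.Icc (0:ℝ) T, p u v * q u v

/-- `‖p‖² := ⟨p,p⟩`. -/
noncomputable def normSq (T : ℝ) (p : ℝ → ℝ → ℝ) : ℝ := ip T p p

/-- The contraction `(p ⊗₁ q)(x,y) := ∫₀^T p(x,u) q(y,u) du`. -/
noncomputable def contr (T : ℝ) (p q : ℝ → ℝ → ℝ) : ℝ → ℝ → ℝ :=
  fun x y => ∫ u in Set.Icc (0:ℝ) T, p x u * q y u

/-- `b_t := (1/λ_t)·∫₀ᵗ ∫₀ˢ (T−s)^{2α−2}(T−u)^{−2α} du ds`. -/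
noncomputable def bfun (T α t : ℝ) : ℝ :=
  (1 / lam T α t) *
    ∫ s in (0:ℝ)..t, ∫ u in (0:ℝ)..s, (T - s) ^ (2 * α - 2) * (T - u) ^ (-(2 * α))

/-- `A_{t,1}`. -/
noncomputable def A1 (T α t : ℝ) : ℝ :=
  (1 / (lam T α t) ^ 2) *
    ∫ x4 in (0:ℝ)..t, ∫ x3 in (0:ℝ)..x4, ∫ x2 in (0:ℝ)..x3, ∫ x1 in (0:ℝ)..x2,
      (T - x4) ^ (2 * α - 2) * (T - x3) ^ (-1 : ℝ) * (T - x2) ^ (-1 : ℝ) *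
        (T - x1) ^ (-(2 * α))

/-- `A_{t,2}`. -/
noncomputable def A2 (T α t : ℝ) : ℝ :=
  (1 / (2 * (lam T α t) ^ 2)) *
    ∫ x4 in (0:ℝ)..t, ∫ x2 in (0:ℝ)..x4, ∫ x3 in (0:ℝ)..x2, ∫ x1 in (0:ℝ)..x3,
      (T - x4) ^ (2 * α - 2) * (T - x2) ^ (2 * α - 2) * (T - x3) ^ (-(2 * α)) *
        (T - x1) ^ (-(2 * α))

/-- helper: `z^c ≤ a^c + b^c` when `0 < a ≤ z ≤ b`. -/
lemma rpow_between {a b z c : ℝ} (ha : 0 < a) (haz : a ≤ z) (hzb : z ≤ b) :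
    z ^ c ≤ a ^ c + b ^ c := by
  rcases le_or_gt 0 c with hc | hc
  · have h1 : z ^ c ≤ b ^ c := Real.rpow_le_rpow (by linarith) hzb hc
    have h2 : (0:ℝ) ≤ a ^ c := Real.rpow_nonneg ha.le c
    linarith
  · have h1 : z ^ c ≤ a ^ c := Real.rpow_le_rpow_of_nonpos ha haz hc.le
    have h2 : (0:ℝ) ≤ b ^ c := Real.rpow_nonneg (by linarith) c
    linarith

set_option maxHeartbeats 1000000 in
theorem stmt_19 (T α : ℝ) (hT : 0 < T) (hα : 1 / 2 < α) :
    ∃ c > 0, ∃ t₀ : ℝ, max 0 (T - 1 / Real.exp 1) < t₀ ∧ t₀ < T ∧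
      ∀ t : ℝ, t₀ < t → t < T →
        c / Real.sqrt |Real.log (T - t)|
          ≤ |ip T (contr T (fker T α t) (fker T α t)) (fker T α t)| := by
  have hβ : 0 < 2 * α - 1 := by linarith
  have hexp : (2:ℝ) ≤ Real.exp 1 := by nlinarith [Real.add_one_le_exp 1]
  have hexppos : (0:ℝ) < Real.exp 1 := Real.exp_pos 1
  set δ : ℝ := min (1 / Real.exp 1) (T / 4) / 2 with hδdef
  have hδpos : 0 < δ := by
    have h1 : 0 < 1 / Real.exp 1 := by positivity
    have h2 : 0 < T / 4 := by linarith
    have := lt_min h1 h2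
    positivity
  have hδe : δ < 1 / Real.exp 1 := by
    have h1 : 0 < 1 / Real.exp 1 := by positivity
    have := min_le_left (1 / Real.exp 1) (T / 4)
    rw [hδdef]
    linarith
  have hδT : δ ≤ T / 8 := by
    have := min_le_right (1 / Real.exp 1) (T / 4)
    rw [hδdef]; linarith
  have hδ1 : δ < 1 := by
    have h1 : 1 / Real.exp 1 ≤ 1 / 2 := by
      rw [div_le_div_iff₀ hexppos (by norm_num)]; linarith
    linarith
  have hδ2δ : δ ^ 2 < δ := by nlinarith
  refine ⟨(2:ℝ) ^ (-(2*α)) * (2*α-1) * Real.sqrt (2*α-1) / 128, by positivity,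
    T - δ ^ 2, ?_, by nlinarith, ?_⟩
  · rw [max_lt_iff]
    constructor
    · nlinarith
    · have : δ ^ 2 < 1 / Real.exp 1 := lt_trans hδ2δ hδe
      linarith
  intro t ht₀ htT
  have hε : 0 < T - t := by linarith
  have hεδ2 : T - t < δ ^ 2 := by linarith
  have hεδ : T - t < δ := lt_trans hεδ2 hδ2δ
  have hε1 : T - t < 1 := lt_trans hεδ hδ1
  set L := |Real.log (T - t)| with hLdef
  have hlogε : Real.log (T - t) < 0 := Real.log_neg hε hε1
  have hLval : L = - Real.log (T - t) := abs_of_neg hlogε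
  have hLpos : 0 < L := by rw [hLval]; linarith
  have hL2 : 2 * (- Real.log δ) < L := by
    have h1 : Real.log (T - t) < Real.log (δ ^ 2) := Real.log_lt_log hε hεδ2
    have h2 : Real.log (δ ^ 2) = 2 * Real.log δ := by
      rw [Real.log_pow]; push_cast; ring
    rw [hLval]; linarith
  have hlam : lam T α t = L / (2*α-1) := rfl
  have hlampos : 0 < lam T α t := by rw [hlam]; positivity
  set sl := Real.sqrt (lam T α t) with hsl
  have hslpos : 0 < sl := Real.sqrt_pos.2 hlampos
  set s1 := 1 / (2 * sl) with hs1
  have hs1pos : 0 < s1 := by positivity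
  set f := fker T α t with hf
  -- nonnegativity of f
  have hfnn : ∀ u v, 0 ≤ f u v := by
    intro u v
    rw [hf]; unfold fker
    split
    · rename_i h
      obtain ⟨hu, hv⟩ := h
      have h1 : 0 < T - max u v := by
        have := max_le hu.2 hv.2; linarith
      have h2 : 0 < T - min u v := by
        have := min_le_left u v; have := hu.2; linarith
      have := Real.rpow_nonneg h1.le (α - 1)
      have := Real.rpow_nonneg h2.le (-α)
      have : (0:ℝ) ≤ 1 / (2 * Real.sqrt (lam T α t)) := by positivity
      positivity
    · exact le_refl _
  -- upper bound for f
  set Cf := (1 / (2 * Real.sqrt (lam T α t))) * ((T - t) ^ (α-1) + T ^ (α-1)) * (T-t) ^ (-α)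
    with hCf
  have hCfnn : 0 ≤ Cf := by
    rw [hCf]
    have h1 := Real.rpow_nonneg hε.le (α-1)
    have h2 := Real.rpow_nonneg hT.le (α-1)
    have h3 := Real.rpow_nonneg hε.le (-α)
    positivity
  have hfub : ∀ u v, f u v ≤ Cf := by
    intro u v
    rw [hf]; unfold fker
    split
    · rename_i h
      obtain ⟨hu, hv⟩ := h
      have hmaxt : max u v ≤ t := max_le hu.2 hv.2
      have hmint : min u v ≤ t := le_trans (min_le_left u v) hu.2
      have h1 : (T - max u v) ^ (α-1) ≤ (T - t) ^ (α-1) + T ^ (α-1) := by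
        apply rpow_between hε (by linarith)
        have h0 : 0 ≤ max u v := le_trans hu.1 (le_max_left u v)
        linarith
      have h2 : (T - min u v) ^ (-α) ≤ (T - t) ^ (-α) := by
        apply Real.rpow_le_rpow_of_nonpos (by linarith) (by linarith) (by linarith)
      have h3 : (0:ℝ) ≤ 1 / (2 * Real.sqrt (lam T α t)) := by positivity
      have h4 : (0:ℝ) ≤ (T - max u v) ^ (α-1) := by
        apply Real.rpow_nonneg; linarith
      have h5 : (0:ℝ) ≤ (T - min u v) ^ (-α) := by
        apply Real.rpow_nonneg
        have := min_le_left u v; linarith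
      rw [hCf]
      apply mul_le_mul _ h2 h5 _
      · exact mul_le_mul (le_refl _) h1 h4 h3
      · have h6 := Real.rpow_nonneg hε.le (α-1)
        have h7 := Real.rpow_nonneg hT.le (α-1)
        positivity
    · exact hCfnn
  -- measurability of f
  have hfm : Measurable fun p : ℝ × ℝ => f p.1 p.2 := by
    rw [hf]; unfold fker
    refine Measurable.ite ?_ (by fun_prop) measurable_const
    exact (measurableSet_Icc.prod measurableSet_Icc :
      MeasurableSet (Set.Icc (0:ℝ) t ×ˢ Set.Icc (0:ℝ) t))
  have hfm1 : ∀ u, Measurable (f u) := fun u => hfm.comp measurable_prodMk_left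
  -- integrability helper
  have hIH : ∀ (g : ℝ → ℝ) (C : ℝ), Measurable g → (∀ x, |g x| ≤ C) →
      ∀ a b : ℝ, IntegrableOn g (Set.Icc a b) := by
    intro g C hg hb a b
    refine Integrable.mono' (g := fun _ => C)
      (integrableOn_const measure_Icc_lt_top.ne) hg.aestronglyMeasurable
      (ae_of_all _ fun x => ?_)
    simpa using hb x
  -- bound helper
  have hbnd : ∀ (g : ℝ → ℝ) (C : ℝ), IntegrableOn g (Set.Icc 0 T) → (∀ x, g x ≤ C) →
      (∫ x in Set.Icc (0:ℝ) T, g x) ≤ T * C := by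
    intro g C hg hb
    calc (∫ x in Set.Icc (0:ℝ) T, g x) ≤ ∫ _x in Set.Icc (0:ℝ) T, C :=
          setIntegral_mono_on hg (integrableOn_const measure_Icc_lt_top.ne)
            measurableSet_Icc (fun x _ => hb x)
      _ = T * C := by
          rw [setIntegral_const, measureReal_def, Real.volume_Icc, smul_eq_mul,
            ENNReal.toReal_ofReal (by linarith)]
          norm_num
  have hprodb : ∀ u v x : ℝ, f u x * f v x ≤ Cf * Cf := fun u v x =>
    mul_le_mul (hfub u x) (hfub v x) (hfnn v x) hCfnn
  have hprod_int : ∀ u v : ℝ, IntegrableOn (fun w => f u w * f v w) (Set.Icc 0 T) := by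
    intro u v
    apply hIH _ (Cf * Cf) ((hfm1 u).mul (hfm1 v))
    intro x
    rw [Pi.mul_apply, abs_of_nonneg (mul_nonneg (hfnn u x) (hfnn v x))]
    exact hprodb u v x
  set K := contr T f f with hK
  have hKval : ∀ u v, K u v = ∫ w in Set.Icc (0:ℝ) T, f u w * f v w := fun _ _ => rfl
  have hKnn : ∀ u v, 0 ≤ K u v := by
    intro u v; rw [hKval]
    exact integral_nonneg fun w => mul_nonneg (hfnn u w) (hfnn v w)
  have hKub : ∀ u v, K u v ≤ T * (Cf * Cf) := by
    intro u v; rw [hKval]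
    exact hbnd _ _ (hprod_int u v) (hprodb u v)
  have hKm : Measurable fun p : ℝ × ℝ => K p.1 p.2 := by
    have hsm : StronglyMeasurable fun q : (ℝ × ℝ) × ℝ => f q.1.1 q.2 * f q.1.2 q.2 := by
      apply Measurable.stronglyMeasurable
      exact ((hfm.comp ((measurable_fst.fst).prodMk measurable_snd)).mul
        (hfm.comp ((measurable_fst.snd).prodMk measurable_snd)))
    have h := hsm.integral_prod_right' (ν := volume.restrict (Set.Icc (0:ℝ) T))
    exact h.measurable
  set Cg := T * (Cf * Cf) * Cf with hCg
  have hCgnn : 0 ≤ Cg := by rw [hCg]; positivity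
  set G : ℝ → ℝ → ℝ := fun u v => K u v * f u v with hG
  have hGval : ∀ u v, G u v = K u v * f u v := fun _ _ => rfl
  have hGnn : ∀ u v, 0 ≤ G u v := fun u v => mul_nonneg (hKnn u v) (hfnn u v)
  have hGub : ∀ u v, G u v ≤ Cg := by
    intro u v
    rw [hGval, hCg]
    exact mul_le_mul (hKub u v) (hfub u v) (hfnn u v) (by positivity)
  have hGm : Measurable fun p : ℝ × ℝ => G p.1 p.2 := hKm.mul hfm
  have hGint : ∀ u, IntegrableOn (G u) (Set.Icc 0 T) := by
    intro u
    apply hIH _ Cg (hGm.comp measurable_prodMk_left)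
    intro x
    show |G u x| ≤ Cg
    rw [abs_of_nonneg (hGnn u x)]
    exact hGub u x
  set F : ℝ → ℝ := fun u => ∫ v in Set.Icc (0:ℝ) T, G u v with hF
  have hFval : ∀ u, F u = ∫ v in Set.Icc (0:ℝ) T, G u v := fun _ => rfl
  have hFnn : ∀ u, 0 ≤ F u := by
    intro u; rw [hFval]
    exact integral_nonneg fun v => hGnn u v
  have hFm : Measurable F := by
    have h := (hGm.stronglyMeasurable.integral_prod_right'
      (ν := volume.restrict (Set.Icc (0:ℝ) T)))
    exact h.measurable
  have hFint : IntegrableOn F (Set.Icc 0 T) := by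
    apply hIH _ (T * Cg) hFm
    intro u
    rw [abs_of_nonneg (hFnn u)]
    exact hbnd _ _ (hGint u) (hGub u)
  -- the key pointwise lower bound
  have hkey : ∀ u ∈ Set.Icc (T - δ) t,
      s1 ^ 3 * (2:ℝ) ^ (-(2*α)) / 8 * (T - u)⁻¹ ≤ F u := by
    intro u hu
    obtain ⟨hu1, hu2⟩ := hu
    have hb0 : 0 < T - u := by linarith
    have hbδ : T - u ≤ δ := by linarith
    have hbε : T - t ≤ T - u := by linarith
    have hb8 : T - u ≤ T / 8 := le_trans hbδ hδT
    have hut : u ∈ Set.Icc (0:ℝ) t := ⟨by linarith, hu2⟩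
    have hsub : Set.Icc (T - 2*(T-u)) (T - 3/2*(T-u)) ⊆ Set.Icc (0:ℝ) T := by
      intro x hx
      obtain ⟨hx1, hx2⟩ := hx
      exact ⟨by linarith, by linarith⟩
    -- pointwise bound on G on the small box
    have step2 : ∀ v ∈ Set.Icc (T - 2*(T-u)) (T - 3/2*(T-u)),
        s1 ^ 3 * (2:ℝ) ^ (-(2*α)) / (4 * (T-u)^2) ≤ G u v := by
      intro v hv
      obtain ⟨hv1, hv2⟩ := hv
      have hvpos : 0 ≤ v := by linarith
      have hvt : v ≤ t := by linarith
      have hvu : v < u := by linarith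
      have hvIcc : v ∈ Set.Icc (0:ℝ) t := ⟨hvpos, hvt⟩
      have hTv1 : 3/2*(T-u) ≤ T - v := by linarith
      have hTv2 : T - v ≤ 2*(T-u) := by linarith
      have hTvpos : 0 < T - v := by linarith
      have hfuv : f u v = s1 * ((T-u) ^ (α-1) * (T-v) ^ (-α)) := by
        rw [hf]; unfold fker
        rw [if_pos ⟨hut, hvIcc⟩, max_eq_left hvu.le, min_eq_right hvu.le, hs1, hsl]
        ring
      have hwsub : Set.Icc v u ⊆ Set.Icc (0:ℝ) T := by
        intro w hw
        obtain ⟨hw1, hw2⟩ := hw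
        exact ⟨by linarith, by linarith⟩
      have hXnn : (0:ℝ) ≤ (T-u) ^ (α-1) * (T-v) ^ (-α) :=
        mul_nonneg (Real.rpow_nonneg hb0.le _) (Real.rpow_nonneg hTvpos.le _)
      have hm1 : ∀ w ∈ Set.Icc v u,
          s1 ^ 2 * ((T-u) ^ (α-1) * (T-v) ^ (-α)) * (2*(T-u))⁻¹ ≤ f u w * f v w := by
        intro w hw
        obtain ⟨hw1, hw2⟩ := hw
        have hwIcc : w ∈ Set.Icc (0:ℝ) t := ⟨le_trans hvpos hw1, le_trans hw2 hu2⟩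
        have hTw : 0 < T - w := by linarith
        have hTwv : T - w ≤ T - v := by linarith
        have hfuw : f u w = s1 * ((T-u) ^ (α-1) * (T-w) ^ (-α)) := by
          rw [hf]; unfold fker
          rw [if_pos ⟨hut, hwIcc⟩, max_eq_left hw2, min_eq_right hw2, hs1, hsl]
          ring
        have hfvw : f v w = s1 * ((T-w) ^ (α-1) * (T-v) ^ (-α)) := by
          rw [hf]; unfold fker
          rw [if_pos ⟨hvIcc, hwIcc⟩, max_eq_right hw1, min_eq_left hw1, hs1, hsl]
          ring
        have hpow : (T-w) ^ (-α) * (T-w) ^ (α-1) = (T-w)⁻¹ := by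
          rw [← Real.rpow_add hTw]
          have : -α + (α-1) = (-1 : ℝ) := by ring
          rw [this, Real.rpow_neg_one]
        have heq : f u w * f v w
            = s1 ^ 2 * ((T-u) ^ (α-1) * (T-v) ^ (-α)) * ((T-w) ^ (-α) * (T-w) ^ (α-1)) := by
          rw [hfuw, hfvw]; ring
        rw [heq, hpow]
        apply mul_le_mul_of_nonneg_left _ (mul_nonneg (by positivity) hXnn)
        exact inv_anti₀ hTw (by linarith)
      have hKlb : s1 ^ 2 * ((T-u) ^ (α-1) * (T-v) ^ (-α)) * (2*(T-u))⁻¹ * (u - v)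
          ≤ K u v := by
        have h1 := setIntegral_ge_of_const_le (μ := volume) measurableSet_Icc
          measure_Icc_lt_top.ne hm1 ((hprod_int u v).mono_set hwsub)
        have h2 : (volume (Set.Icc v u)).toReal = u - v := by
          rw [Real.volume_Icc, ENNReal.toReal_ofReal (by linarith)]
        rw [measureReal_def, h2, smul_eq_mul, mul_comm] at h1
        have h3 : (∫ w in Set.Icc v u, f u w * f v w) ≤ K u v := by
          rw [hKval]
          exact setIntegral_mono_set (hprod_int u v)
            (ae_of_all _ fun w => mul_nonneg (hfnn u w) (hfnn v w)) hwsub.eventuallyLE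
        linarith
      have hKlb2 : s1 ^ 2 * ((T-u) ^ (α-1) * (T-v) ^ (-α)) / 4 ≤ K u v := by
        refine le_trans ?_ hKlb
        have huv2 : (T-u)/2 ≤ u - v := by linarith
        have hnn : (0:ℝ) ≤ s1 ^ 2 * ((T-u) ^ (α-1) * (T-v) ^ (-α)) * (2*(T-u))⁻¹ := by
          apply mul_nonneg (mul_nonneg (by positivity) hXnn)
          positivity
        calc s1 ^ 2 * ((T-u) ^ (α-1) * (T-v) ^ (-α)) / 4
            = s1 ^ 2 * ((T-u) ^ (α-1) * (T-v) ^ (-α)) * (2*(T-u))⁻¹ * ((T-u)/2) := by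
              field_simp
              ring
          _ ≤ s1 ^ 2 * ((T-u) ^ (α-1) * (T-v) ^ (-α)) * (2*(T-u))⁻¹ * (u - v) :=
              mul_le_mul_of_nonneg_left huv2 hnn
      have hstep : s1 ^ 2 * ((T-u) ^ (α-1) * (T-v) ^ (-α)) / 4 * f u v ≤ G u v := by
        rw [hGval]
        exact mul_le_mul_of_nonneg_right hKlb2 (hfnn u v)
      refine le_trans ?_ hstep
      rw [hfuv]
      have e1 : (T-u) ^ (α-1) * (T-u) ^ (α-1) = (T-u) ^ (2*α-2) := by
        rw [← Real.rpow_add hb0]; ring_nf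
      have e2 : (T-v) ^ (-α) * (T-v) ^ (-α) = (T-v) ^ (-(2*α)) := by
        rw [← Real.rpow_add hTvpos]; ring_nf
      have e3 : (2*(T-u)) ^ (-(2*α)) ≤ (T-v) ^ (-(2*α)) :=
        Real.rpow_le_rpow_of_nonpos hTvpos hTv2 (by linarith)
      have e4 : (2*(T-u)) ^ (-(2*α)) = (2:ℝ) ^ (-(2*α)) * (T-u) ^ (-(2*α)) :=
        Real.mul_rpow (by norm_num) hb0.le
      have e5 : (T-u) ^ (2*α-2) * (T-u) ^ (-(2*α)) = ((T-u)^2)⁻¹ := by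
        rw [← Real.rpow_add hb0]
        have h1 : 2*α-2 + -(2*α) = (-2 : ℝ) := by ring
        rw [h1, show ((-2 : ℝ)) = ((-2 : ℤ) : ℝ) by norm_num, Real.rpow_intCast]
        rw [zpow_neg]
        norm_cast
      calc s1 ^ 3 * (2:ℝ) ^ (-(2*α)) / (4 * (T-u)^2)
          = s1 ^ 3 / 4 * ((T-u) ^ (2*α-2) * ((2:ℝ) ^ (-(2*α)) * (T-u) ^ (-(2*α)))) := by
            rw [mul_left_comm ((T-u) ^ (2*α-2)), e5]
            field_simp
        _ = s1 ^ 3 / 4 * ((T-u) ^ (2*α-2) * (2*(T-u)) ^ (-(2*α))) := by rw [e4]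
        _ ≤ s1 ^ 3 / 4 * ((T-u) ^ (2*α-2) * (T-v) ^ (-(2*α))) := by
            apply mul_le_mul_of_nonneg_left _ (by positivity)
            exact mul_le_mul_of_nonneg_left e3 (Real.rpow_nonneg hb0.le _)
        _ = s1 ^ 2 * ((T-u) ^ (α-1) * (T-v) ^ (-α)) / 4 * (s1 * ((T-u) ^ (α-1) * (T-v) ^ (-α))) := by
            rw [← e1, ← e2]; ring
    -- integrate over the small box
    have step3 : s1 ^ 3 * (2:ℝ) ^ (-(2*α)) / (4 * (T-u)^2) * ((T-u)/2)
        ≤ ∫ v in Set.Icc (T - 2*(T-u)) (T - 3/2*(T-u)), G u v := by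
      have h1 := setIntegral_ge_of_const_le (μ := volume) measurableSet_Icc
        measure_Icc_lt_top.ne step2 ((hGint u).mono_set hsub)
      have h2 : (volume (Set.Icc (T - 2*(T-u)) (T - 3/2*(T-u)))).toReal = (T-u)/2 := by
        rw [Real.volume_Icc, ENNReal.toReal_ofReal (by linarith)]
        ring
      rw [measureReal_def, h2, smul_eq_mul, mul_comm] at h1
      exact h1
    have step1 : (∫ v in Set.Icc (T - 2*(T-u)) (T - 3/2*(T-u)), G u v) ≤ F u := by
      rw [hFval]
      exact setIntegral_mono_set (hGint u) (ae_of_all _ fun v => hGnn u v) hsub.eventuallyLE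
    have heq : s1 ^ 3 * (2:ℝ) ^ (-(2*α)) / (4 * (T-u)^2) * ((T-u)/2)
        = s1 ^ 3 * (2:ℝ) ^ (-(2*α)) / 8 * (T - u)⁻¹ := by
      field_simp
      ring
    rw [heq] at step3
    linarith
  -- assemble
  have hTδt : T - δ ≤ t := by linarith
  have hst1 : Set.Icc (T - δ) t ⊆ Set.Icc (0:ℝ) T := by
    intro x hx
    obtain ⟨hx1, hx2⟩ := hx
    exact ⟨by linarith, by linarith⟩
  have hipF : ip T K f = ∫ u in Set.Icc (0:ℝ) T, F u := rfl
  have main1 : (∫ u in Set.Icc (T - δ) t, F u) ≤ ip T K f := by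
    rw [hipF]
    exact setIntegral_mono_set hFint (ae_of_all _ hFnn) hst1.eventuallyLE
  have hcont : IntegrableOn (fun u => s1 ^ 3 * (2:ℝ) ^ (-(2*α)) / 8 * (T - u)⁻¹)
      (Set.Icc (T - δ) t) := by
    apply ContinuousOn.integrableOn_Icc
    apply ContinuousOn.mul continuousOn_const
    apply ContinuousOn.inv₀ (continuousOn_const.sub continuousOn_id)
    intro x hx
    obtain ⟨hx1, hx2⟩ := hx
    simp only [Pi.sub_apply, id]
    intro h
    have : x = T := by linarith [sub_eq_zero.mp h]
    linarith
  have main2 : (∫ u in Set.Icc (T - δ) t, s1 ^ 3 * (2:ℝ) ^ (-(2*α)) / 8 * (T - u)⁻¹)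
      ≤ ∫ u in Set.Icc (T - δ) t, F u :=
    setIntegral_mono_on hcont (hFint.mono_set hst1) measurableSet_Icc hkey
  have main3 : (∫ u in Set.Icc (T - δ) t, s1 ^ 3 * (2:ℝ) ^ (-(2*α)) / 8 * (T - u)⁻¹)
      = s1 ^ 3 * (2:ℝ) ^ (-(2*α)) / 8 * (Real.log δ - Real.log (T - t)) := by
    rw [integral_const_mul]
    congr 1
    rw [integral_Icc_eq_integral_Ioc, ← intervalIntegral.integral_of_le hTδt]
    rw [show (∫ u in (T-δ)..t, (T - u)⁻¹)
        = ∫ x in (T - t)..(T - (T - δ)), x⁻¹ from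
      intervalIntegral.integral_comp_sub_left (fun x => x⁻¹) T]
    have h0 : (0:ℝ) ∉ Set.uIcc (T - t) (T - (T - δ)) := by
      intro h
      rw [Set.mem_uIcc] at h
      rcases h with ⟨h1, h2⟩ | ⟨h1, h2⟩ <;> linarith
    rw [integral_inv h0, show T - (T - δ) = δ by ring,
      Real.log_div (ne_of_gt hδpos) (ne_of_gt hε)]
  have hipnn : 0 ≤ ip T K f := by
    rw [hipF]
    exact integral_nonneg hFnn
  have hlog : L / 2 ≤ Real.log δ - Real.log (T - t) := by
    rw [hLval] at hL2 ⊢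
    linarith
  have hDnn : (0:ℝ) ≤ s1 ^ 3 * (2:ℝ) ^ (-(2*α)) / 8 := by positivity
  -- final arithmetic
  have hsLpos : 0 < Real.sqrt L := Real.sqrt_pos.2 hLpos
  have hsβpos : 0 < Real.sqrt (2*α-1) := Real.sqrt_pos.2 hβ
  have hslval : sl = Real.sqrt L / Real.sqrt (2*α-1) := by
    rw [hsl, hlam, Real.sqrt_div hLpos.le]
  have h3β : (Real.sqrt (2*α-1)) ^ 3 = (2*α-1) * Real.sqrt (2*α-1) := by
    rw [pow_succ, Real.sq_sqrt hβ.le]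
  have h3L : (Real.sqrt L) ^ 3 = L * Real.sqrt L := by
    rw [pow_succ, Real.sq_sqrt hLpos.le]
  have e1 : s1 = Real.sqrt (2*α-1) / (2 * Real.sqrt L) := by
    rw [hs1, hslval]
    field_simp
  have e2 : s1 ^ 3 = ((2*α-1) * Real.sqrt (2*α-1)) / (8 * (L * Real.sqrt L)) := by
    rw [e1, div_pow, h3β, mul_pow, h3L]
    norm_num
  have hfinal : (2:ℝ) ^ (-(2*α)) * (2*α-1) * Real.sqrt (2*α-1) / 128 / Real.sqrt L
      = s1 ^ 3 * (2:ℝ) ^ (-(2*α)) / 8 * (L / 2) := by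
    rw [e2]
    field_simp
    ring
  calc (2:ℝ) ^ (-(2*α)) * (2*α-1) * Real.sqrt (2*α-1) / 128 / Real.sqrt L
      = s1 ^ 3 * (2:ℝ) ^ (-(2*α)) / 8 * (L / 2) := hfinal
    _ ≤ s1 ^ 3 * (2:ℝ) ^ (-(2*α)) / 8 * (Real.log δ - Real.log (T - t)) :=
        mul_le_mul_of_nonneg_left hlog hDnn
    _ = ∫ u in Set.Icc (T - δ) t, s1 ^ 3 * (2:ℝ) ^ (-(2*α)) / 8 * (T - u)⁻¹ := main3.symm
    _ ≤ ∫ u in Set.Icc (T - δ) t, F u := main2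
    _ ≤ ip T K f := main1
    _ ≤ |ip T K f| := le_abs_self _
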